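/- (Greedy optimality) In the sequence formulation, the lower bound min_j γ*(C + R_j; S, Q_j) is maximized by the greedy choice: at each step choose Q_j ∈ S' with γ*(C + R_j; S, Q_j) = max_{Q ∈ S'} γ*(C + R_j; S, Q). The resulting bound equals both the optimal sequence bound and the semigroup bound min_{λ ∈ Λ'} max_{Q ∈ S'} γ*(C+λ; S, Q). -/

import Mathlib

noncomputable section

/-- `R_j = Q_0 + Q_1 + ... + Q_{j-1}`, the partial sums of a sequence of points,
viewed as divisors. -/
def Rdiv {Point : Type*} (Q : ℕ → Point) (j : ℕ) : Point →₀ ℤ :=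
  ∑ k ∈ Finset.range j, Finsupp.single (Q k) 1

namespace GreedyAux

variable {Point : Type*}

/-- total mass of a divisor -/
def msum (ν : Point →₀ ℤ) : ℤ := ν.sum fun _ v => v

lemma msum_add (a b : Point →₀ ℤ) : msum (a + b) = msum a + msum b :=
  Finsupp.sum_add_index' (fun _ => rfl) (fun _ _ _ => rfl)

lemma msum_single (P : Point) : msum (Finsupp.single P (1 : ℤ)) = 1 := by
  simp [msum, Finsupp.sum_single_index]

lemma msum_nonneg {ν : Point →₀ ℤ} (h : 0 ≤ ν) : 0 ≤ msum ν :=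
  Finset.sum_nonneg fun p _ => h p

lemma msum_mono {a b : Point →₀ ℤ} (h : a ≤ b) : msum a ≤ msum b := by
  have h0 : 0 ≤ b - a := sub_nonneg.mpr h
  have h1 := msum_add a (b - a)
  rw [add_sub_cancel] at h1
  have := msum_nonneg h0
  omega

lemma apply_le_msum {ν : Point →₀ ℤ} (h : 0 ≤ ν) (p : Point) : ν p ≤ msum ν := by
  by_cases hp : p ∈ ν.support
  · exact Finset.single_le_sum (fun q _ => h q) hp
  · have : ν p = 0 := Finsupp.notMem_support_iff.mp hp
    rw [this]; exact msum_nonneg h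

lemma Rdiv_succ (Q : ℕ → Point) (j : ℕ) :
    Rdiv Q (j + 1) = Rdiv Q j + Finsupp.single (Q j) 1 :=
  Finset.sum_range_succ _ _

lemma Rdiv_zero (Q : ℕ → Point) : Rdiv Q 0 = 0 := by simp [Rdiv]

lemma Rdiv_nonneg (Q : ℕ → Point) (j : ℕ) : 0 ≤ Rdiv Q j := by
  induction j with
  | zero => rw [Rdiv_zero]
  | succ j ih =>
    rw [Rdiv_succ]
    exact add_nonneg ih (Finsupp.single_nonneg.mpr zero_le_one)

lemma Rdiv_support {S' : Finset Point} (Q : ℕ → Point) (hQ : ∀ j, Q j ∈ S') (j : ℕ) :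
    (Rdiv Q j).support ⊆ S' := by
  classical
  induction j with
  | zero => simp [Rdiv_zero]
  | succ j ih =>
    rw [Rdiv_succ]
    refine (Finsupp.support_add).trans ?_
    apply Finset.union_subset ih
    refine (Finsupp.support_single_subset).trans ?_
    simp [hQ j]

lemma msum_Rdiv (Q : ℕ → Point) (j : ℕ) : msum (Rdiv Q j) = j := by
  induction j with
  | zero => simp [Rdiv_zero, msum]
  | succ j ih => rw [Rdiv_succ, msum_add, ih, msum_single]; push_cast; ring

lemma mono_many (gstar : (Point →₀ ℤ) → Point → ℤ)
    (hmono : ∀ (D : Point →₀ ℤ) (P Q : Point), P ≠ Q →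
      gstar D Q ≤ gstar (D + Finsupp.single P 1) Q)
    (Q0 : Point) (D : Point →₀ ℤ) :
    ∀ n (ν : Point →₀ ℤ), (msum ν).toNat ≤ n → 0 ≤ ν → ν Q0 = 0 →
      gstar D Q0 ≤ gstar (D + ν) Q0 := by
  intro n
  induction n with
  | zero =>
    intro ν hn h0 hq
    have hz : ν = 0 := by
      ext p
      have h1 := apply_le_msum h0 p
      have h2 := h0 p
      simp only [Finsupp.coe_zero, Pi.zero_apply] at h2 ⊢
      omega
    rw [hz, add_zero]
  | succ n ih =>
    intro ν hn h0 hq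
    by_cases hz : ν = 0
    · rw [hz, add_zero]
    · obtain ⟨P, hP⟩ := Finsupp.support_nonempty_iff.mpr hz
      have hP1 : 1 ≤ ν P := by
        have := h0 P
        have := Finsupp.mem_support_iff.mp hP
        simp only [Finsupp.coe_zero, Pi.zero_apply] at *
        omega
      have hPQ : P ≠ Q0 := by
        intro h; rw [h, hq] at hP1; omega
      set ν' := ν - Finsupp.single P 1 with hν'
      have h0' : 0 ≤ ν' := by
        intro p
        simp only [hν', Finsupp.coe_sub, Pi.sub_apply, Finsupp.coe_zero, Pi.zero_apply]
        by_cases hp : p = P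
        · subst hp; simp [hP1]
        · have := h0 p
          simp only [Finsupp.coe_zero, Pi.zero_apply] at this
          simp [Finsupp.single_apply_eq_zero.mpr, Finsupp.single_apply, hp]
          omega
      have hq' : ν' Q0 = 0 := by
        rw [hν', Finsupp.sub_apply, hq, Finsupp.single_eq_of_ne' hPQ]
        ring
      have hms : msum ν' = msum ν - 1 := by
        have : ν' + Finsupp.single P 1 = ν := by simp [hν']
        have h2 := msum_add ν' (Finsupp.single P 1)
        rw [this, msum_single] at h2
        omega
      have hn' : (msum ν').toNat ≤ n := by
        have hnn := msum_nonneg h0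
        omega
      calc gstar D Q0 ≤ gstar (D + ν') Q0 := ih ν' hn' h0' hq'
        _ ≤ gstar (D + ν' + Finsupp.single P 1) Q0 := hmono _ P Q0 hPQ
        _ = gstar (D + ν) Q0 := by rw [add_assoc]; simp [hν']

lemma first_break (lam : Point →₀ ℤ) (hlam : 0 ≤ lam) (Q'' : ℕ → Point) :
    ∃ j ≤ (msum lam).toNat, Rdiv Q'' j ≤ lam ∧
      (Rdiv Q'' j) (Q'' j) = lam (Q'' j) := by
  set n := (msum lam).toNat with hn
  have hmlam : msum lam = (n : ℤ) := by
    have := msum_nonneg hlam; omega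
  classical
  have hPn : ¬ Rdiv Q'' (n + 1) ≤ lam := by
    intro h
    have := msum_mono h
    rw [msum_Rdiv, hmlam] at this
    omega
  have hex : ∃ j, ¬ Rdiv Q'' (j + 1) ≤ lam := ⟨n, hPn⟩
  obtain ⟨j, hjn, hj, hjmin⟩ : ∃ j, j ≤ n ∧ (¬ Rdiv Q'' (j + 1) ≤ lam) ∧
      ∀ k < j, Rdiv Q'' (k + 1) ≤ lam :=
    ⟨Nat.find hex, Nat.find_le hPn, Nat.find_spec hex,
      fun k hk => not_not.mp (Nat.find_min hex hk)⟩
  have hjle : Rdiv Q'' j ≤ lam := by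
    cases j with
    | zero => rw [Rdiv_zero]; exact hlam
    | succ k => exact hjmin k (Nat.lt_succ_self k)
  refine ⟨j, hjn, hjle, ?_⟩
  have hj' : ∃ p, lam p < (Rdiv Q'' (j + 1)) p := by
    by_contra hc
    push_neg at hc
    exact hj (Finsupp.le_def.mpr hc)
  obtain ⟨p, hp⟩ := hj'
  rw [Rdiv_succ, Finsupp.add_apply] at hp
  by_cases hpq : p = Q'' j
  · subst hpq
    rw [Finsupp.single_eq_same] at hp
    have h2 := Finsupp.le_def.mp hjle (Q'' j)
    omega
  · rw [Finsupp.single_eq_of_ne' (Ne.symm hpq)] at hp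
    have h2 := Finsupp.le_def.mp hjle p
    omega

lemma key {S' : Finset Point} (hS' : S'.Nonempty) (C : Point →₀ ℤ)
    (gstar : (Point →₀ ℤ) → Point → ℤ)
    (hmono : ∀ (D : Point →₀ ℤ) (P Q : Point), P ≠ Q →
      gstar D Q ≤ gstar (D + Finsupp.single P 1) Q)
    (lam : Point →₀ ℤ) (hlam : 0 ≤ lam)
    (Q'' : ℕ → Point) (hQ'' : ∀ j, Q'' j ∈ S') (r : ℕ) (hr : (msum lam).toNat ≤ r) :
    ((Finset.range (r + 1)).inf' Finset.nonempty_range_add_one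
        fun j => gstar (C + Rdiv Q'' j) (Q'' j))
      ≤ S'.sup' hS' fun Q' => gstar (C + lam) Q' := by
  obtain ⟨j, hjn, hjle, hjq⟩ := first_break lam hlam Q''
  have hmem : j ∈ Finset.range (r + 1) := by
    simp only [Finset.mem_range]; omega
  refine le_trans (Finset.inf'_le _ hmem) ?_
  have step : gstar (C + Rdiv Q'' j) (Q'' j) ≤ gstar (C + lam) (Q'' j) := by
    have h0 : 0 ≤ lam - Rdiv Q'' j := sub_nonneg.mpr hjle
    have hq0 : (lam - Rdiv Q'' j) (Q'' j) = 0 := by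
      simp [Finsupp.sub_apply, hjq]
    have h := mono_many gstar hmono (Q'' j) (C + Rdiv Q'' j)
      (msum (lam - Rdiv Q'' j)).toNat (lam - Rdiv Q'' j) le_rfl h0 hq0
    have heq : C + Rdiv Q'' j + (lam - Rdiv Q'' j) = C + lam := by
      abel
    rwa [heq] at h
  exact step.trans (Finset.le_sup' _ (hQ'' j))

end GreedyAux

theorem greedy_optimal {Point : Type*} (S' : Finset Point) (hS' : S'.Nonempty)
    (C : Point →₀ ℤ)
    (gstar : (Point →₀ ℤ) → Point → ℤ)
    (hmono : ∀ (D : Point →₀ ℤ) (P Q : Point), P ≠ Q →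
      gstar D Q ≤ gstar (D + Finsupp.single P 1) Q)
    (hbdd : BddBelow {m : ℤ | ∃ lam : Point →₀ ℤ, 0 ≤ lam ∧ lam.support ⊆ S' ∧
      m = S'.sup' hS' fun Q => gstar (C + lam) Q})
    (Q : ℕ → Point) (hQ : ∀ j, Q j ∈ S')
    (hgreedy : ∀ j, gstar (C + Rdiv Q j) (Q j)
      = S'.sup' hS' fun Q' => gstar (C + Rdiv Q j) Q') :
    ∃ r0 : ℕ, ∀ r ≥ r0,
      ((Finset.range (r + 1)).inf' Finset.nonempty_range_add_one
          fun j => gstar (C + Rdiv Q j) (Q j))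
        = sSup {m : ℤ | ∃ Q'' : ℕ → Point, (∀ j, Q'' j ∈ S') ∧
            m = (Finset.range (r + 1)).inf' Finset.nonempty_range_add_one
                  fun j => gstar (C + Rdiv Q'' j) (Q'' j)} ∧
      ((Finset.range (r + 1)).inf' Finset.nonempty_range_add_one
          fun j => gstar (C + Rdiv Q j) (Q j))
        = sInf {m : ℤ | ∃ lam : Point →₀ ℤ, 0 ≤ lam ∧ lam.support ⊆ S' ∧
            m = S'.sup' hS' fun Q' => gstar (C + lam) Q'} := by
  classical
  open GreedyAux in
  set T := {m : ℤ | ∃ lam : Point →₀ ℤ, 0 ≤ lam ∧ lam.support ⊆ S' ∧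
      m = S'.sup' hS' fun Q' => gstar (C + lam) Q'} with hT
  have hbdd' : BddBelow T := hbdd
  have hTne : T.Nonempty := ⟨_, 0, le_refl 0, by simp, rfl⟩
  have hmemInf : sInf T ∈ T := Int.csInf_mem hTne hbdd'
  obtain ⟨lam0, hlam0, hsupp0, hμ⟩ := hmemInf
  refine ⟨(GreedyAux.msum lam0).toNat, fun r hr => ?_⟩
  have hBle : ((Finset.range (r + 1)).inf' Finset.nonempty_range_add_one
      fun j => gstar (C + Rdiv Q j) (Q j)) ≤ sInf T := by
    rw [hμ]
    exact GreedyAux.key hS' C gstar hmono lam0 hlam0 Q hQ r hr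
  have hleB : sInf T ≤ ((Finset.range (r + 1)).inf' Finset.nonempty_range_add_one
      fun j => gstar (C + Rdiv Q j) (Q j)) := by
    refine Finset.le_inf' _ _ fun j _ => ?_
    rw [hgreedy j]
    exact csInf_le hbdd' ⟨Rdiv Q j, GreedyAux.Rdiv_nonneg Q j,
      GreedyAux.Rdiv_support Q hQ j, rfl⟩
  have hB : ((Finset.range (r + 1)).inf' Finset.nonempty_range_add_one
      fun j => gstar (C + Rdiv Q j) (Q j)) = sInf T := le_antisymm hBle hleB
  refine ⟨?_, hB⟩
  set A := {m : ℤ | ∃ Q'' : ℕ → Point, (∀ j, Q'' j ∈ S') ∧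
      m = (Finset.range (r + 1)).inf' Finset.nonempty_range_add_one
            fun j => gstar (C + Rdiv Q'' j) (Q'' j)} with hA
  have hmemA : ((Finset.range (r + 1)).inf' Finset.nonempty_range_add_one
      fun j => gstar (C + Rdiv Q j) (Q j)) ∈ A := ⟨Q, hQ, rfl⟩
  have hub : ∀ m ∈ A, m ≤ ((Finset.range (r + 1)).inf' Finset.nonempty_range_add_one
      fun j => gstar (C + Rdiv Q j) (Q j)) := by
    rintro m ⟨Q'', hQ'', rfl⟩
    rw [hB, hμ]
    exact GreedyAux.key hS' C gstar hmono lam0 hlam0 Q'' hQ'' r hr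
  exact le_antisymm (le_csSup ⟨_, hub⟩ hmemA) (csSup_le ⟨_, hmemA⟩ hub)
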